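/- Let X be a set with an involution τ : X → X. Suppose ψ : X → U(2) satisfies det(ψ(τ(x))) = conj(det(ψ(x))) for all x ∈ X, and ξ : X → SU(2) satisfies ξ(τ(x)) = ξ(x)⁻¹ for all x ∈ X. Then the map G_ψ(ξ)(x) := −ψ(τ(x))⁻¹·ξ(x)·Q·conj(ψ(x))·Q takes values in SU(2) (i.e. det(G_ψ(ξ)(x)) = 1 for all x) and satisfies G_ψ(ξ)(τ(x)) = G_ψ(ξ)(x)⁻¹ for all x ∈ X. Conversely, if ψ : X → U(2) is such that G_ψ(ξ) takes values in SU(2) for the constant map ξ ≡ 1, then det(ψ(τ(x))) = conj(det(ψ(x))) for all x ∈ X. -/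

import Mathlib

/-- The matrix `Q = [[0, -1], [1, 0]]`. -/
def Q : Matrix (Fin 2) (Fin 2) ℂ := !![0, -1; 1, 0]

/-- The gauge action `G_ψ(ξ)(x) := -ψ(τ x)⁻¹ · ξ(x) · Q · conj(ψ(x)) · Q`. -/
noncomputable def Gact {X : Type*} (τ : X → X) (ψ ξ : X → Matrix (Fin 2) (Fin 2) ℂ) :
    X → Matrix (Fin 2) (Fin 2) ℂ :=
  fun x => -((ψ (τ x))⁻¹ * ξ x * Q * ((ψ x).map (starRingEnd ℂ)) * Q)

open Matrix

lemma QmapQ (A : Matrix (Fin 2) (Fin 2) ℂ) :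
    Q * A.map (starRingEnd ℂ) * Q = -(adjugate Aᴴ) := by
  ext i j
  fin_cases i <;> fin_cases j <;>
    simp [Q, Matrix.mul_apply, Matrix.vecMul, dotProduct, Fin.sum_univ_two, Matrix.adjugate_fin_two,
      Matrix.conjTranspose_apply, Matrix.map_apply]

lemma adj_conjTranspose_of_unitary {A : Matrix (Fin 2) (Fin 2) ℂ}
    (hA : A ∈ Matrix.unitaryGroup (Fin 2) ℂ) :
    adjugate Aᴴ = (starRingEnd ℂ A.det) • A := by
  have h1 : A * Aᴴ = 1 := by
    have := (Matrix.mem_unitaryGroup_iff).mp hA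
    simpa [Matrix.star_eq_conjTranspose] using this
  calc adjugate Aᴴ = (A * Aᴴ) * adjugate Aᴴ := by rw [h1, one_mul]
    _ = A * (Aᴴ * adjugate Aᴴ) := by rw [mul_assoc]
    _ = A * ((Aᴴ).det • 1) := by rw [Matrix.mul_adjugate]
    _ = (Aᴴ).det • A := by rw [Matrix.mul_smul, mul_one]
    _ = (starRingEnd ℂ A.det) • A := by rw [Matrix.det_conjTranspose]; rfl

lemma QmapQ_unitary {A : Matrix (Fin 2) (Fin 2) ℂ}
    (hA : A ∈ Matrix.unitaryGroup (Fin 2) ℂ) :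
    Q * A.map (starRingEnd ℂ) * Q = -((starRingEnd ℂ A.det) • A) := by
  rw [QmapQ, adj_conjTranspose_of_unitary hA]

lemma Gact_eq {X : Type*} (τ : X → X) (ψ ξ : X → Matrix (Fin 2) (Fin 2) ℂ)
    (hψ : ∀ x, ψ x ∈ Matrix.unitaryGroup (Fin 2) ℂ) (x : X) :
    Gact τ ψ ξ x = (starRingEnd ℂ (ψ x).det) • ((ψ (τ x))⁻¹ * ξ x * ψ x) := by
  unfold Gact
  rw [mul_assoc ((ψ (τ x))⁻¹ * ξ x * Q), mul_assoc ((ψ (τ x))⁻¹ * ξ x)]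
  rw [← mul_assoc Q, QmapQ_unitary (hψ x)]
  rw [mul_neg, neg_neg, Matrix.mul_smul, mul_assoc]

lemma smul_mem_unitary {c : ℂ} (hc : starRingEnd ℂ c * c = 1)
    {A : Matrix (Fin 2) (Fin 2) ℂ} (hA : A ∈ Matrix.unitaryGroup (Fin 2) ℂ) :
    c • A ∈ Matrix.unitaryGroup (Fin 2) ℂ := by
  rw [Matrix.mem_unitaryGroup_iff]
  rw [star_smul, Matrix.smul_mul, Matrix.mul_smul, smul_smul]
  rw [(Matrix.mem_unitaryGroup_iff).mp hA]
  have : c * star c = 1 := by rw [mul_comm]; exact hc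
  rw [this, one_smul]

/-- If `ψ : X → U(2)` satisfies `det(ψ(τ x)) = conj(det(ψ x))` and `ξ : X → SU(2)` satisfies
`ξ(τ x) = (ξ x)⁻¹`, then `G_ψ(ξ)` takes values in `SU(2)` and satisfies
`G_ψ(ξ)(τ x) = (G_ψ(ξ)(x))⁻¹`.  Conversely, if `G_ψ(ξ)` takes values in `SU(2)` for the
constant map `ξ ≡ 1`, then `det(ψ(τ x)) = conj(det(ψ x))` for all `x`. -/
theorem Gact_preserves_equivariant_SU2 (X : Type*) (τ : X → X)
    (hτ : Function.Involutive τ) :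
    (∀ ψ ξ : X → Matrix (Fin 2) (Fin 2) ℂ,
      (∀ x, ψ x ∈ Matrix.unitaryGroup (Fin 2) ℂ) →
      (∀ x, (ψ (τ x)).det = starRingEnd ℂ ((ψ x).det)) →
      (∀ x, ξ x ∈ Matrix.specialUnitaryGroup (Fin 2) ℂ) →
      (∀ x, ξ (τ x) = (ξ x)⁻¹) →
      (∀ x, Gact τ ψ ξ x ∈ Matrix.specialUnitaryGroup (Fin 2) ℂ) ∧
      (∀ x, Gact τ ψ ξ (τ x) = (Gact τ ψ ξ x)⁻¹)) ∧
    (∀ ψ : X → Matrix (Fin 2) (Fin 2) ℂ,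
      (∀ x, ψ x ∈ Matrix.unitaryGroup (Fin 2) ℂ) →
      (∀ x, Gact τ ψ (fun _ => (1 : Matrix (Fin 2) (Fin 2) ℂ)) x ∈
        Matrix.specialUnitaryGroup (Fin 2) ℂ) →
      ∀ x, (ψ (τ x)).det = starRingEnd ℂ ((ψ x).det)) := by
  constructor
  · intro ψ ξ hU hdet hξ hξτ
    -- basic facts
    have hd : ∀ x, starRingEnd ℂ ((ψ x).det) * (ψ x).det = 1 := by
      intro x
      have := (Unitary.mem_iff.mp (Matrix.det_of_mem_unitary (hU x))).1
      simpa using this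
    have hdne : ∀ x, (ψ x).det ≠ 0 := by
      intro x h
      have := hd x
      rw [h, mul_zero] at this
      exact zero_ne_one this
    have hcdne : ∀ x, starRingEnd ℂ ((ψ x).det) ≠ 0 := by
      intro x h
      have := hd x
      rw [h, zero_mul] at this
      exact zero_ne_one this
    have hξu : ∀ x, ξ x ∈ Matrix.unitaryGroup (Fin 2) ℂ :=
      fun x => ((Matrix.mem_specialUnitaryGroup_iff).mp (hξ x)).1
    have hξd : ∀ x, (ξ x).det = 1 :=
      fun x => ((Matrix.mem_specialUnitaryGroup_iff).mp (hξ x)).2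
    constructor
    · intro x
      rw [Matrix.mem_specialUnitaryGroup_iff, Gact_eq τ ψ ξ hU x]
      constructor
      · refine smul_mem_unitary ?_ ?_
        · simpa [mul_comm] using hd x
        · refine mul_mem (mul_mem ?_ (hξu x)) (hU x)
          have hinv : (ψ (τ x))⁻¹ = star (ψ (τ x)) :=
            Matrix.inv_eq_right_inv ((Matrix.mem_unitaryGroup_iff).mp (hU (τ x)))
          rw [hinv]
          exact Unitary.star_mem (hU (τ x))
      · rw [Matrix.det_smul, Matrix.det_mul, Matrix.det_mul,
          Matrix.det_nonsing_inv, hdet x, hξd x, Ring.inverse_eq_inv']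
        simp only [Fintype.card_fin]
        have h2 := hd x
        field_simp [hcdne x]
        linear_combination h2
    · intro x
      rw [Gact_eq τ ψ ξ hU (τ x), Gact_eq τ ψ ξ hU x, hτ x, hξτ x, hdet x]
      have hc : starRingEnd ℂ (starRingEnd ℂ ((ψ x).det)) = (ψ x).det := by
        simp
      rw [hc]
      symm
      apply Matrix.inv_eq_right_inv
      rw [Matrix.smul_mul, Matrix.mul_smul, smul_smul, hd x]
      rw [one_smul]
      have e1 : IsUnit (ψ x).det := isUnit_iff_ne_zero.mpr (hdne x)
      have e2 : IsUnit (ξ x).det := by rw [hξd x]; exact isUnit_one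
      have e3 : IsUnit (ψ (τ x)).det := isUnit_iff_ne_zero.mpr (hdne (τ x))
      calc (ψ (τ x))⁻¹ * ξ x * ψ x * ((ψ x)⁻¹ * (ξ x)⁻¹ * ψ (τ x))
          = (ψ (τ x))⁻¹ * (ξ x * (ψ x * ((ψ x)⁻¹ * ((ξ x)⁻¹ * ψ (τ x))))) := by
            simp only [mul_assoc]
        _ = (ψ (τ x))⁻¹ * ψ (τ x) := by
            rw [Matrix.mul_nonsing_inv_cancel_left _ _ e1,
              Matrix.mul_nonsing_inv_cancel_left _ _ e2]
        _ = 1 := Matrix.nonsing_inv_mul _ e3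
  · intro ψ hU hG x
    have hd : starRingEnd ℂ ((ψ x).det) * (ψ x).det = 1 := by
      have := (Unitary.mem_iff.mp (Matrix.det_of_mem_unitary (hU x))).1
      simpa using this
    have hdne : (ψ (τ x)).det ≠ 0 := by
      intro h
      have := (Unitary.mem_iff.mp (Matrix.det_of_mem_unitary (hU (τ x)))).1
      rw [h] at this; simp at this
    have h1 := ((Matrix.mem_specialUnitaryGroup_iff).mp (hG x)).2
    rw [Gact_eq τ ψ _ hU x] at h1
    rw [Matrix.det_smul, Matrix.det_mul, Matrix.det_mul,
      Matrix.det_nonsing_inv, Ring.inverse_eq_inv'] at h1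
    simp only [Fintype.card_fin, Matrix.det_one, mul_one] at h1
    field_simp [hdne] at h1
    linear_combination -h1 + (starRingEnd ℂ ((ψ x).det)) * hd
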